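/- Let ε > 0 and 0 ≤ δ ≤ 1, and let p₀, p₁, φ₀, φ₁ ∈ [0,1] satisfy δφ_b - e^{-ε}δφ_{1-b} ≤ p_b - e^{-ε}p_{1-b} for both b ∈ {0,1}. Define ψ_b = (1/((1-δ)(e^ε - 1))) · (e^ε p_b - δ e^ε φ_b - p_{1-b} + δ φ_{1-b}) when δ < 1 (and ψ_b = φ_b when δ = 1). Then for δ < 1 and both b ∈ {0,1}: ψ_b ≥ 0, and δφ_b + (1-δ)·(e^ε/(1+e^ε))·ψ_b + (1-δ)·(1/(1+e^ε))·ψ_{1-b} = p_b. -/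

import Mathlib

/-- The "pure-DP component" probability `ψ_b` built from the transcript probability
`pb`, the leakage component `φb`, and the corresponding quantities `pb'`, `φb'` of
the other index: `ψ_b = (e^ε p_b - δ e^ε φ_b - p_{1-b} + δ φ_{1-b}) / ((1-δ)(e^ε - 1))`. -/
noncomputable def psi (ε δ pb φb pb' φb' : ℝ) : ℝ :=
  (1 / ((1 - δ) * (Real.exp ε - 1))) *
    (Real.exp ε * pb - δ * Real.exp ε * φb - pb' + δ * φb')

/-- For `δ < 1`, the components `ψ_b` are nonnegative and the mixture with the
randomized-response weights `δ`, `(1-δ)e^ε/(1+e^ε)`, `(1-δ)/(1+e^ε)` recovers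
exactly the transcript probabilities `p_b`. -/
theorem stmt15 (ε δ p0 p1 φ0 φ1 : ℝ) (hε : 0 < ε) (hδ0 : 0 ≤ δ) (hδ1 : δ < 1)
    (hp0 : p0 ∈ Set.Icc (0:ℝ) 1) (hp1 : p1 ∈ Set.Icc (0:ℝ) 1)
    (hφ0 : φ0 ∈ Set.Icc (0:ℝ) 1) (hφ1 : φ1 ∈ Set.Icc (0:ℝ) 1)
    (h0 : δ * φ0 - Real.exp (-ε) * (δ * φ1) ≤ p0 - Real.exp (-ε) * p1)
    (h1 : δ * φ1 - Real.exp (-ε) * (δ * φ0) ≤ p1 - Real.exp (-ε) * p0) :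
    0 ≤ psi ε δ p0 φ0 p1 φ1 ∧ 0 ≤ psi ε δ p1 φ1 p0 φ0 ∧
    δ * φ0 + (1 - δ) * (Real.exp ε / (1 + Real.exp ε)) * psi ε δ p0 φ0 p1 φ1
      + (1 - δ) * (1 / (1 + Real.exp ε)) * psi ε δ p1 φ1 p0 φ0 = p0 ∧
    δ * φ1 + (1 - δ) * (Real.exp ε / (1 + Real.exp ε)) * psi ε δ p1 φ1 p0 φ0
      + (1 - δ) * (1 / (1 + Real.exp ε)) * psi ε δ p0 φ0 p1 φ1 = p1 := by
  have hE : 1 < Real.exp ε := by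
    simpa using Real.exp_lt_exp.mpr hε
  have hE0 : 0 < Real.exp ε := Real.exp_pos ε
  have hinv : Real.exp (-ε) = (Real.exp ε)⁻¹ := Real.exp_neg ε
  have hden : 0 < (1 - δ) * (Real.exp ε - 1) := by nlinarith
  have key : ∀ a b c d : ℝ,
      δ * a - Real.exp (-ε) * (δ * b) ≤ c - Real.exp (-ε) * d →
      0 ≤ psi ε δ c a d b := by
    intro a b c d h
    have h' : Real.exp ε * (δ * a - (Real.exp ε)⁻¹ * (δ * b)) ≤
        Real.exp ε * (c - (Real.exp ε)⁻¹ * d) := by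
      rw [hinv] at h
      exact mul_le_mul_of_nonneg_left h hE0.le
    have hnum : 0 ≤ Real.exp ε * c - δ * Real.exp ε * a - d + δ * b := by
      have h1 : Real.exp ε * (δ * a) - δ * b ≤ Real.exp ε * c - d := by
        have hne : (Real.exp ε) ≠ 0 := ne_of_gt hE0
        field_simp at h'
        nlinarith [h']
      nlinarith [h1]
    unfold psi
    positivity
  refine ⟨key φ0 φ1 p0 p1 h0, key φ1 φ0 p1 p0 h1, ?_, ?_⟩ <;>
  · unfold psi
    have h1E : (1 + Real.exp ε) ≠ 0 := by positivity
    have hd1 : (1 - δ) ≠ 0 := by linarith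
    have hd2 : (Real.exp ε - 1) ≠ 0 := by linarith
    field_simp
    ring
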